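/- The Gini index G(X) = 1 − 2∫₀¹ L_X(u) du of a nonnegative mean-one random variable is nondecreasing along a martingale: if E[X₂|X₁] = X₁ a.s. and E[X₁]=E[X₂]=1, then G(X₁) ≤ G(X₂). -/

import Mathlib

open MeasureTheory ProbabilityTheory
open scoped ProbabilityTheory

/-- Cumulative distribution function of a random variable `X`. -/
noncomputable def cdfOf {Ω : Type*} [MeasureSpace Ω] (X : Ω → ℝ) (x : ℝ) : ℝ :=
  (ℙ {ω | X ω ≤ x}).toReal

/-- Generalized inverse (quantile function) of a CDF `F`:
`F⁻¹(u) = inf {x : F x ≥ u}`. -/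
noncomputable def quantile (F : ℝ → ℝ) (u : ℝ) : ℝ :=
  sInf {x : ℝ | u ≤ F x}

/-- Lorenz curve of a random variable `X`: `L(u) = ∫₀ᵘ F⁻¹(τ) dτ`. -/
noncomputable def lorenz {Ω : Type*} [MeasureSpace Ω] (X : Ω → ℝ) (u : ℝ) : ℝ :=
  ∫ τ in (0:ℝ)..u, quantile (cdfOf X) τ

/-- Gini index `G(X) = 1 − 2∫₀¹ L_X(u) du`. -/
noncomputable def gini {Ω : Type*} [MeasureSpace Ω] (X : Ω → ℝ) : ℝ :=
  1 - 2 * ∫ u in (0:ℝ)..1, lorenz X u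

open Set Filter Topology

section CDF

variable {Ω : Type*} [MeasureSpace Ω] [IsProbabilityMeasure (ℙ : Measure Ω)] {X : Ω → ℝ}

lemma cdfOf_mono (X : Ω → ℝ) : Monotone (cdfOf X) := fun a b hab =>
  ENNReal.toReal_mono (measure_ne_top _ _)
    (measure_mono fun ω (h : X ω ≤ a) => le_trans h hab)

lemma cdfOf_nonneg (X : Ω → ℝ) (x : ℝ) : 0 ≤ cdfOf X x := ENNReal.toReal_nonneg

lemma cdfOf_le_one (X : Ω → ℝ) (x : ℝ) : cdfOf X x ≤ 1 := by
  rw [cdfOf, ← ENNReal.toReal_one]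
  exact ENNReal.toReal_mono ENNReal.one_ne_top prob_le_one

lemma ofReal_cdfOf (X : Ω → ℝ) (x : ℝ) :
    ENNReal.ofReal (cdfOf X x) = ℙ {ω | X ω ≤ x} :=
  ENNReal.ofReal_toReal (measure_ne_top _ _)

lemma cdfOf_neg (hpos : ∀ ω, 0 ≤ X ω) {x : ℝ} (hx : x < 0) : cdfOf X x = 0 := by
  have h : {ω | X ω ≤ x} = (∅ : Set Ω) :=
    eq_empty_iff_forall_notMem.2 fun ω h => absurd (le_trans (hpos ω) h) (not_le.2 hx)
  rw [cdfOf, h]; simp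

lemma exists_cdfOf_ge (X : Ω → ℝ) {τ : ℝ} (hτ : τ < 1) : ∃ y : ℝ, τ ≤ cdfOf X y := by
  have hmono : Monotone (fun n : ℕ => {ω | X ω ≤ (n : ℝ)}) := by
    intro a b hab ω h
    exact le_trans h (by exact_mod_cast hab : (a:ℝ) ≤ (b:ℝ))
  have hU : (⋃ n : ℕ, {ω | X ω ≤ (n : ℝ)}) = univ := by
    ext ω; simp only [mem_iUnion, mem_setOf_eq, mem_univ, iff_true]
    exact exists_nat_ge (X ω)
  have ht := tendsto_measure_iUnion_atTop (μ := (ℙ : Measure Ω)) hmono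
  rw [hU, measure_univ] at ht
  have ht' : Tendsto (fun n : ℕ => cdfOf X n) atTop (𝓝 1) := by
    have := (ENNReal.tendsto_toReal ENNReal.one_ne_top).comp ht
    exact this
  obtain ⟨n, hn⟩ := (ht'.eventually (eventually_ge_nhds hτ)).exists
  exact ⟨n, hn⟩

lemma le_cdfOf_of_forall_add (hm : Measurable X) {τ x : ℝ}
    (h : ∀ ε > (0:ℝ), τ ≤ cdfOf X (x + ε)) : τ ≤ cdfOf X x := by
  have hanti : Antitone (fun n : ℕ => {ω | X ω ≤ x + 1 / (n + 1)}) := by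
    intro a b hab ω hω
    simp only [mem_setOf_eq] at hω ⊢
    have : (1 : ℝ) / (b + 1) ≤ 1 / (a + 1) := by
      apply one_div_le_one_div_of_le (by positivity)
      exact add_le_add_left (by exact_mod_cast hab : (a:ℝ) ≤ (b:ℝ)) 1
    linarith
  have hInter : (⋂ n : ℕ, {ω | X ω ≤ x + 1 / (n + 1)}) = {ω | X ω ≤ x} := by
    ext ω
    simp only [mem_iInter, mem_setOf_eq]
    constructor
    · intro hω
      refine le_of_forall_pos_le_add fun ε hε => ?_
      obtain ⟨n, hn⟩ := exists_nat_one_div_lt hε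
      exact le_trans (hω n) (by linarith)
    · intro hω n
      have : (0:ℝ) < 1 / (n + 1) := by positivity
      linarith
  have hmeas : ∀ n : ℕ, NullMeasurableSet {ω | X ω ≤ x + 1 / (n + 1)} (ℙ : Measure Ω) :=
    fun n => (hm measurableSet_Iic).nullMeasurableSet
  have ht := tendsto_measure_iInter_atTop hmeas hanti ⟨0, measure_ne_top _ _⟩
  rw [hInter] at ht
  have ht' : Tendsto (fun n : ℕ => cdfOf X (x + 1 / (n + 1))) atTop (𝓝 (cdfOf X x)) := by
    have := (ENNReal.tendsto_toReal (measure_ne_top _ _)).comp ht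
    exact this
  exact ge_of_tendsto' ht' fun n => h _ (by positivity)

end CDF
section Quantile

variable {Ω : Type*} [MeasureSpace Ω] [IsProbabilityMeasure (ℙ : Measure Ω)] {X : Ω → ℝ}

lemma quantile_nonneg (hpos : ∀ ω, 0 ≤ X ω) (τ : ℝ) : 0 ≤ quantile (cdfOf X) τ := by
  rcases lt_or_ge 0 τ with hτ | hτ
  · apply Real.sInf_nonneg
    intro x hx
    by_contra hc
    push_neg at hc
    rw [mem_setOf_eq, cdfOf_neg hpos hc] at hx
    linarith
  · have hS : {x : ℝ | τ ≤ cdfOf X x} = univ :=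
      eq_univ_of_forall fun x => le_trans hτ (cdfOf_nonneg X x)
    have : ¬BddBelow {x : ℝ | τ ≤ cdfOf X x} := by
      rw [hS]
      rintro ⟨b, hb⟩
      have := hb (mem_univ (b - 1))
      linarith
    rw [quantile, Real.sInf_of_not_bddBelow this]

lemma bddBelow_quantile_set (hpos : ∀ ω, 0 ≤ X ω) {τ : ℝ} (h0 : 0 < τ) :
    BddBelow {x : ℝ | τ ≤ cdfOf X x} := by
  refine ⟨0, fun y hy => ?_⟩
  by_contra hc
  push_neg at hc
  rw [mem_setOf_eq, cdfOf_neg hpos hc] at hy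
  linarith

lemma quantile_le_iff (hm : Measurable X) (hpos : ∀ ω, 0 ≤ X ω) {τ : ℝ}
    (h0 : 0 < τ) (h1 : τ < 1) (x : ℝ) :
    quantile (cdfOf X) τ ≤ x ↔ τ ≤ cdfOf X x := by
  have hbdd := bddBelow_quantile_set hpos h0
  obtain ⟨y, hy⟩ := exists_cdfOf_ge X h1
  have hne : {x : ℝ | τ ≤ cdfOf X x}.Nonempty := ⟨y, hy⟩
  constructor
  · intro hle
    have hq : τ ≤ cdfOf X (quantile (cdfOf X) τ) := by
      apply le_cdfOf_of_forall_add hm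
      intro ε hε
      obtain ⟨a, ha, hlt⟩ := Real.lt_sInf_add_pos hne hε
      exact le_trans ha (cdfOf_mono X (by rw [quantile]; linarith))
    exact le_trans hq (cdfOf_mono X hle)
  · intro hmem
    exact csInf_le hbdd hmem

lemma quantile_monotoneOn (hpos : ∀ ω, 0 ≤ X ω) :
    MonotoneOn (quantile (cdfOf X)) (Ioo (0:ℝ) 1) := by
  intro a ha b hb hab
  apply csInf_le_csInf (bddBelow_quantile_set hpos ha.1)
  · obtain ⟨y, hy⟩ := exists_cdfOf_ge X hb.2
    exact ⟨y, hy⟩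
  · exact fun x hx => le_trans hab hx

lemma measurable_qext (hm : Measurable X) (hpos : ∀ ω, 0 ≤ X ω) :
    Measurable ((Ioo (0:ℝ) 1).indicator (quantile (cdfOf X))) := by
  apply measurable_of_Iic
  intro x
  rcases le_or_gt 0 x with hx | hx
  · have hset : (Ioo (0:ℝ) 1).indicator (quantile (cdfOf X)) ⁻¹' Iic x =
        (Ioo (0:ℝ) 1 ∩ Iic (cdfOf X x)) ∪ (Ioo (0:ℝ) 1)ᶜ := by
      ext τ
      by_cases hτ : τ ∈ Ioo (0:ℝ) 1
      · simp only [mem_preimage, mem_Iic, indicator_of_mem hτ, mem_union, mem_inter_iff, hτ,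
          true_and, mem_compl_iff, not_true_eq_false, or_false]
        exact quantile_le_iff hm hpos hτ.1 hτ.2 x
      · simp only [mem_preimage, mem_Iic, indicator_of_notMem hτ, mem_union, mem_inter_iff, hτ,
          false_and, mem_compl_iff, not_false_eq_true, or_true, iff_true]
        exact hx
    rw [hset]
    exact ((measurableSet_Ioo.inter measurableSet_Iic).union measurableSet_Ioo.compl)
  · have hset : (Ioo (0:ℝ) 1).indicator (quantile (cdfOf X)) ⁻¹' Iic x =
        Ioo (0:ℝ) 1 ∩ Iic (cdfOf X x) := by
      ext τ
      by_cases hτ : τ ∈ Ioo (0:ℝ) 1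
      · simp only [mem_preimage, mem_Iic, indicator_of_mem hτ, mem_inter_iff, hτ, true_and]
        exact quantile_le_iff hm hpos hτ.1 hτ.2 x
      · simp only [mem_preimage, mem_Iic, indicator_of_notMem hτ, mem_inter_iff, hτ, false_and,
          iff_false, not_le]
        exact hx
    rw [hset]
    exact measurableSet_Ioo.inter measurableSet_Iic

lemma aemeasurable_quantile (hm : Measurable X) (hpos : ∀ ω, 0 ≤ X ω) :
    AEMeasurable (quantile (cdfOf X)) (volume.restrict (Ioo (0:ℝ) 1)) := by
  refine ⟨(Ioo (0:ℝ) 1).indicator (quantile (cdfOf X)), measurable_qext hm hpos, ?_⟩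
  filter_upwards [ae_restrict_mem measurableSet_Ioo] with τ hτ
  exact (indicator_of_mem hτ _).symm

lemma vol_Iic_inter_Ioo {c : ℝ} (h0 : 0 ≤ c) (h1 : c ≤ 1) :
    volume (Iic c ∩ Ioo (0:ℝ) 1) = ENNReal.ofReal c := by
  apply le_antisymm
  · calc volume (Iic c ∩ Ioo (0:ℝ) 1) ≤ volume (Icc (0:ℝ) c) := by
          apply measure_mono
          rintro τ ⟨hτ1, hτ2⟩
          exact ⟨hτ2.1.le, hτ1⟩
      _ = ENNReal.ofReal c := by rw [Real.volume_Icc, sub_zero]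
  · calc ENNReal.ofReal c = volume (Ioo (0:ℝ) c) := by rw [Real.volume_Ioo, sub_zero]
      _ ≤ volume (Iic c ∩ Ioo (0:ℝ) 1) := by
          apply measure_mono
          rintro τ ⟨hτ1, hτ2⟩
          exact ⟨hτ2.le, hτ1, lt_of_lt_of_le hτ2 h1⟩

lemma map_quantile (hm : Measurable X) (hpos : ∀ ω, 0 ≤ X ω) :
    Measure.map (quantile (cdfOf X)) (volume.restrict (Ioo (0:ℝ) 1)) = Measure.map X ℙ := by
  have haem := aemeasurable_quantile hm hpos
  haveI : IsFiniteMeasure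
      (Measure.map (quantile (cdfOf X)) (volume.restrict (Ioo (0:ℝ) 1))) := by
    constructor
    rw [Measure.map_apply_of_aemeasurable haem MeasurableSet.univ]
    calc volume.restrict (Ioo (0:ℝ) 1) (quantile (cdfOf X) ⁻¹' univ)
        ≤ volume.restrict (Ioo (0:ℝ) 1) univ := measure_mono (subset_univ _)
      _ = volume (Ioo (0:ℝ) 1) := by rw [Measure.restrict_apply_univ]
      _ < ⊤ := by rw [Real.volume_Ioo]; exact ENNReal.ofReal_lt_top
  refine Measure.ext_of_Iic _ _ fun x => ?_
  rw [Measure.map_apply_of_aemeasurable haem measurableSet_Iic,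
    Measure.map_apply hm measurableSet_Iic,
    Measure.restrict_apply' measurableSet_Ioo]
  have hpre : quantile (cdfOf X) ⁻¹' Iic x ∩ Ioo (0:ℝ) 1 = Iic (cdfOf X x) ∩ Ioo (0:ℝ) 1 := by
    ext τ
    simp only [mem_inter_iff, mem_preimage, mem_Iic, and_congr_left_iff]
    intro hτ
    exact quantile_le_iff hm hpos hτ.1 hτ.2 x
  rw [hpre, vol_Iic_inter_Ioo (cdfOf_nonneg X x) (cdfOf_le_one X x), ofReal_cdfOf]
  rfl

lemma integral_comp_quantile (hm : Measurable X) (hpos : ∀ ω, 0 ≤ X ω)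
    {g : ℝ → ℝ} (hg : Measurable g) :
    ∫ τ in Ioo (0:ℝ) 1, g (quantile (cdfOf X) τ) = ∫ ω, g (X ω) := by
  have h1 : ∫ τ in Ioo (0:ℝ) 1, g (quantile (cdfOf X) τ) =
      ∫ x, g x ∂(Measure.map (quantile (cdfOf X)) (volume.restrict (Ioo (0:ℝ) 1))) :=
    (integral_map (aemeasurable_quantile hm hpos) hg.aestronglyMeasurable).symm
  rw [h1, map_quantile hm hpos, integral_map hm.aemeasurable hg.aestronglyMeasurable]

lemma integrableOn_comp_quantile (hm : Measurable X) (hpos : ∀ ω, 0 ≤ X ω)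
    {g : ℝ → ℝ} (hg : Measurable g) (hint : Integrable (fun ω => g (X ω)) ℙ) :
    IntegrableOn (fun τ => g (quantile (cdfOf X) τ)) (Ioo (0:ℝ) 1) := by
  have := (integrable_map_measure hg.aestronglyMeasurable
    (aemeasurable_quantile hm hpos)).symm.2
  rw [IntegrableOn]
  refine (integrable_map_measure hg.aestronglyMeasurable
    (aemeasurable_quantile hm hpos)).mp ?_
  rw [map_quantile hm hpos]
  exact (integrable_map_measure hg.aestronglyMeasurable hm.aemeasurable).mpr hint

end Quantile
section Lorenz

variable {Ω : Type*} [MeasureSpace Ω] [IsProbabilityMeasure (ℙ : Measure Ω)] {X : Ω → ℝ}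

lemma lorenz_eq_Ioo (X : Ω → ℝ) {u : ℝ} (hu : 0 ≤ u) :
    lorenz X u = ∫ τ in Ioo (0:ℝ) u, quantile (cdfOf X) τ := by
  rw [lorenz, intervalIntegral.integral_of_le hu, integral_Ioc_eq_integral_Ioo]

lemma quantile_integrableOn (hm : Measurable X) (hpos : ∀ ω, 0 ≤ X ω)
    (h : Integrable X ℙ) :
    IntegrableOn (quantile (cdfOf X)) (Ioo (0:ℝ) 1) :=
  integrableOn_comp_quantile (g := fun x : ℝ => x) hm hpos measurable_id h

set_option maxHeartbeats 1600000 in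
lemma lorenz_ge (hm : Measurable X) (hpos : ∀ ω, 0 ≤ X ω) (h : Integrable X ℙ)
    {u : ℝ} (hu : u ∈ Ioo (0:ℝ) 1) (c : ℝ) :
    u * c - ∫ ω, max (c - X ω) 0 ≤ lorenz X u := by
  set q := quantile (cdfOf X) with hqdef
  have hgmeas : Measurable (fun x : ℝ => max (c - x) 0) := by fun_prop
  have hintmaxΩ : Integrable (fun ω => max (c - X ω) 0) ℙ := ((integrable_const c).sub h).pos_part
  have hqint : IntegrableOn q (Ioo (0:ℝ) 1) := quantile_integrableOn hm hpos h
  have hqint_u : IntegrableOn q (Ioo (0:ℝ) u) := hqint.mono_set (Ioo_subset_Ioo le_rfl hu.2.le)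
  have hcint_u : IntegrableOn (fun _ : ℝ => c) (Ioo (0:ℝ) u) :=
    integrableOn_const (by rw [Real.volume_Ioo]; exact ENNReal.ofReal_ne_top)
  have hcq_int : IntegrableOn (fun τ => c - q τ) (Ioo (0:ℝ) 1) :=
    (integrableOn_const (by rw [Real.volume_Ioo]; exact ENNReal.ofReal_ne_top)).sub hqint
  have hmax_eq : ∫ τ in Ioo (0:ℝ) 1, max (c - q τ) 0 = ∫ ω, max (c - X ω) 0 :=
    integral_comp_quantile hm hpos hgmeas
  have hmaxint : IntegrableOn (fun τ => max (c - q τ) 0) (Ioo (0:ℝ) 1) :=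
    integrableOn_comp_quantile hm hpos hgmeas hintmaxΩ
  have hsub : Ioo (0:ℝ) u ⊆ Ioo (0:ℝ) 1 := Ioo_subset_Ioo le_rfl hu.2.le
  have h1 : ∫ τ in Ioo (0:ℝ) u, (c - q τ) =
      ∫ τ in Ioo (0:ℝ) 1, (Ioo (0:ℝ) u).indicator (fun τ => c - q τ) τ := by
    rw [setIntegral_indicator measurableSet_Ioo, inter_eq_self_of_subset_right hsub]
  have hkey : ∫ τ in Ioo (0:ℝ) u, (c - q τ) ≤ ∫ τ in Ioo (0:ℝ) 1, max (c - q τ) 0 := by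
    rw [h1]
    apply setIntegral_mono_on (hcq_int.indicator measurableSet_Ioo) hmaxint measurableSet_Ioo
    intro τ _
    by_cases hτu : τ ∈ Ioo (0:ℝ) u
    · rw [indicator_of_mem hτu]; exact le_max_left _ _
    · rw [indicator_of_notMem hτu]; exact le_max_right _ _
  have hconst : ∫ _ in Ioo (0:ℝ) u, c = u * c := by
    rw [setIntegral_const, measureReal_def, Real.volume_Ioo, sub_zero, ENNReal.toReal_ofReal hu.1.le, smul_eq_mul]
  have hsplit : ∫ τ in Ioo (0:ℝ) u, (c - q τ) = (∫ _ in Ioo (0:ℝ) u, c) - ∫ τ in Ioo (0:ℝ) u, q τ :=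
    integral_sub hcint_u hqint_u
  rw [lorenz_eq_Ioo X hu.1.le, ← hqdef]
  rw [hsplit, hconst] at hkey
  rw [hmax_eq] at hkey
  linarith

set_option maxHeartbeats 1600000 in
lemma lorenz_le (hm : Measurable X) (hpos : ∀ ω, 0 ≤ X ω) (h : Integrable X ℙ)
    {u : ℝ} (hu : u ∈ Ioo (0:ℝ) 1) :
    lorenz X u ≤ u * quantile (cdfOf X) u
      - ∫ ω, max (quantile (cdfOf X) u - X ω) 0 := by
  set q := quantile (cdfOf X) with hqdef
  set c := q u with hcdef
  have hgmeas : Measurable (fun x : ℝ => max (c - x) 0) := by fun_prop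
  have hqint : IntegrableOn q (Ioo (0:ℝ) 1) := quantile_integrableOn hm hpos h
  have hqint_u : IntegrableOn q (Ioo (0:ℝ) u) := hqint.mono_set (Ioo_subset_Ioo le_rfl hu.2.le)
  have hcint_u : IntegrableOn (fun _ : ℝ => c) (Ioo (0:ℝ) u) :=
    integrableOn_const (by rw [Real.volume_Ioo]; exact ENNReal.ofReal_ne_top)
  have hmax_eq : ∫ τ in Ioo (0:ℝ) 1, max (c - q τ) 0 = ∫ ω, max (c - X ω) 0 :=
    integral_comp_quantile hm hpos hgmeas
  have hsub : Ioo (0:ℝ) u ⊆ Ioo (0:ℝ) 1 := Ioo_subset_Ioo le_rfl hu.2.le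
  have h1 : ∫ τ in Ioo (0:ℝ) u, (c - q τ) =
      ∫ τ in Ioo (0:ℝ) 1, (Ioo (0:ℝ) u).indicator (fun τ => c - q τ) τ := by
    rw [setIntegral_indicator measurableSet_Ioo, inter_eq_self_of_subset_right hsub]
  have h2 : ∫ τ in Ioo (0:ℝ) 1, (Ioo (0:ℝ) u).indicator (fun τ => c - q τ) τ =
      ∫ τ in Ioo (0:ℝ) 1, max (c - q τ) 0 := by
    apply setIntegral_congr_fun measurableSet_Ioo
    intro τ hτ
    by_cases hτu : τ ∈ Ioo (0:ℝ) u
    · rw [indicator_of_mem hτu]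
      have hqle : q τ ≤ c :=
        quantile_monotoneOn hpos ⟨hτu.1, lt_trans hτu.2 hu.2⟩ hu hτu.2.le
      exact (max_eq_left (by linarith)).symm
    · rw [indicator_of_notMem hτu]
      have hut : u ≤ τ := by
        by_contra hc'
        push_neg at hc'
        exact hτu ⟨hτ.1, hc'⟩
      have hqge : c ≤ q τ := quantile_monotoneOn hpos hu hτ hut
      exact (max_eq_right (by linarith)).symm
  have hconst : ∫ _ in Ioo (0:ℝ) u, c = u * c := by
    rw [setIntegral_const, measureReal_def, Real.volume_Ioo, sub_zero, ENNReal.toReal_ofReal hu.1.le, smul_eq_mul]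
  have hsplit : ∫ τ in Ioo (0:ℝ) u, (c - q τ) = (∫ _ in Ioo (0:ℝ) u, c) - ∫ τ in Ioo (0:ℝ) u, q τ :=
    integral_sub hcint_u hqint_u
  rw [lorenz_eq_Ioo X hu.1.le, ← hqdef]
  have := h1.trans (h2.trans hmax_eq)
  rw [hsplit, hconst] at this
  linarith

lemma lorenz_monotoneOn (hm : Measurable X) (hpos : ∀ ω, 0 ≤ X ω) (h : Integrable X ℙ) :
    MonotoneOn (lorenz X) (Icc (0:ℝ) 1) := by
  intro u₁ hu₁ u₂ hu₂ h12
  rw [lorenz_eq_Ioo X hu₁.1, lorenz_eq_Ioo X hu₂.1]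
  have hqint : IntegrableOn (quantile (cdfOf X)) (Ioo (0:ℝ) 1) := quantile_integrableOn hm hpos h
  exact setIntegral_mono_set (hqint.mono_set (Ioo_subset_Ioo le_rfl hu₂.2))
    (ae_of_all _ fun τ => quantile_nonneg hpos τ)
    ((Ioo_subset_Ioo le_rfl h12).eventuallyLE)

end Lorenz

def martSigma {Ω : Type*} (X : Ω → ℝ) : MeasurableSpace Ω :=
  MeasurableSpace.comap X (borel ℝ)


/-- Second law of martingales: the Gini index is nondecreasing along a fair
gamble: if `E[X₂|X₁] = X₁` a.s. and both have mean one, `G(X₁) ≤ G(X₂)`. -/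
theorem gini_nondecreasing {Ω : Type*} [MeasureSpace Ω]
    [IsProbabilityMeasure (ℙ : Measure Ω)]
    (X₁ X₂ : Ω → ℝ) (hm₁ : Measurable X₁) (hm₂ : Measurable X₂)
    (h₁ : Integrable X₁) (h₂ : Integrable X₂)
    (hpos₁ : ∀ ω, 0 ≤ X₁ ω) (hpos₂ : ∀ ω, 0 ≤ X₂ ω)
    (hmean₁ : ∫ ω, X₁ ω = 1) (hmean₂ : ∫ ω, X₂ ω = 1)
    (hmart : (ℙ : Measure Ω)[X₂ | MeasurableSpace.comap X₁ (borel ℝ)] =ᵐ[ℙ] X₁) :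
    gini X₁ ≤ gini X₂ := by
  have hm_le : martSigma X₁ ≤ MeasureSpace.toMeasurableSpace := by
    rintro s ⟨t, ht, rfl⟩
    exact hm₁ (show MeasurableSet t by rw [BorelSpace.measurable_eq (α := ℝ)]; exact ht)
  haveI hsf : SigmaFinite ((ℙ : Measure Ω).trim hm_le) := inferInstance
  have hmart' : (ℙ : Measure Ω)[X₂ | martSigma X₁] =ᵐ[ℙ] X₁ := hmart
  -- expectations of hockey-stick functions compare along the martingale
  have hEcomp : ∀ c : ℝ, ∫ ω, max (c - X₁ ω) 0 ≤ ∫ ω, max (c - X₂ ω) 0 := by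
    intro c
    have hint2 : Integrable (fun ω => max (c - X₂ ω) 0) ℙ := ((integrable_const c).sub h₂).pos_part
    have hint1 : Integrable (fun ω => max (c - X₁ ω) 0) ℙ := ((integrable_const c).sub h₁).pos_part
    have hintc2 : Integrable ((fun _ => c) - X₂) ℙ := (integrable_const c).sub h₂
    have e1 : (ℙ : Measure Ω)[(fun _ => c) - X₂|martSigma X₁] =ᵐ[ℙ] fun ω => c - X₁ ω := by
      filter_upwards [condExp_sub (m := martSigma X₁) (μ := (ℙ : Measure Ω)) (integrable_const c) h₂,
        hmart'] with ω hω1 hω2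
      rw [hω1, Pi.sub_apply, condExp_const hm_le c, hω2]
    have e2 : (ℙ : Measure Ω)[(fun _ => c) - X₂|martSigma X₁]
        ≤ᵐ[ℙ] (ℙ : Measure Ω)[fun ω => max (c - X₂ ω) 0|martSigma X₁] :=
      condExp_mono hintc2 hint2 (ae_of_all _ fun ω => le_max_left _ _)
    have e3 : (0 : Ω → ℝ) ≤ᵐ[ℙ] (ℙ : Measure Ω)[fun ω => max (c - X₂ ω) 0|martSigma X₁] :=
      condExp_nonneg (ae_of_all _ fun ω => le_max_right _ _)
    have e4 : (fun ω => max (c - X₁ ω) 0)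
        ≤ᵐ[ℙ] (ℙ : Measure Ω)[fun ω => max (c - X₂ ω) 0|martSigma X₁] := by
      filter_upwards [e1, e2, e3] with ω hω1 hω2 hω3
      rw [hω1] at hω2
      exact max_le hω2 hω3
    calc ∫ ω, max (c - X₁ ω) 0
        ≤ ∫ ω, ((ℙ : Measure Ω)[fun ω => max (c - X₂ ω) 0|martSigma X₁]) ω :=
          integral_mono_ae hint1 integrable_condExp e4
      _ = ∫ ω, max (c - X₂ ω) 0 := integral_condExp hm_le
  -- pointwise Lorenz comparison on (0,1)
  have hL : ∀ u ∈ Ioo (0:ℝ) 1, lorenz X₂ u ≤ lorenz X₁ u := by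
    intro u hu
    set c := quantile (cdfOf X₂) u with hc
    calc lorenz X₂ u ≤ u * c - ∫ ω, max (c - X₂ ω) 0 := lorenz_le hm₂ hpos₂ h₂ hu
      _ ≤ u * c - ∫ ω, max (c - X₁ ω) 0 := by linarith [hEcomp c]
      _ ≤ lorenz X₁ u := lorenz_ge hm₁ hpos₁ h₁ hu c
  -- interval integrability of Lorenz curves
  have hIL₁ : IntervalIntegrable (lorenz X₁) volume 0 1 := by
    apply MonotoneOn.intervalIntegrable
    rw [uIcc_of_le zero_le_one]
    exact lorenz_monotoneOn hm₁ hpos₁ h₁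
  have hIL₂ : IntervalIntegrable (lorenz X₂) volume 0 1 := by
    apply MonotoneOn.intervalIntegrable
    rw [uIcc_of_le zero_le_one]
    exact lorenz_monotoneOn hm₂ hpos₂ h₂
  have hint : ∫ u in (0:ℝ)..1, lorenz X₂ u ≤ ∫ u in (0:ℝ)..1, lorenz X₁ u := by
    apply intervalIntegral.integral_mono_ae_restrict zero_le_one hIL₂ hIL₁
    have hnull : volume.restrict (Icc (0:ℝ) 1) ((Ioo (0:ℝ) 1)ᶜ) = 0 := by
      rw [Measure.restrict_apply measurableSet_Ioo.compl]
      refine measure_mono_null (fun τ hτ => ?_) (?_ : volume ({0, 1} : Set ℝ) = 0)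
      · obtain ⟨hτ1, hτ2⟩ := hτ
        simp only [mem_compl_iff, mem_Ioo, not_and, not_lt] at hτ1
        rcases eq_or_lt_of_le hτ2.1 with hz | hz
        · exact Or.inl hz.symm
        · exact Or.inr (le_antisymm hτ2.2 (hτ1 hz))
      · exact measure_union_null Real.volume_singleton Real.volume_singleton
    have hae : ∀ᵐ τ ∂(volume.restrict (Icc (0:ℝ) 1)), τ ∈ Ioo (0:ℝ) 1 := by
      rw [ae_iff]
      have hseteq : {τ | ¬τ ∈ Ioo (0:ℝ) 1} = (Ioo (0:ℝ) 1)ᶜ := rfl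
      rw [hseteq]
      exact hnull
    filter_upwards [hae] with τ hτ
    exact hL τ hτ
  rw [gini, gini]
  linarith
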